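/- Let α be a type with decidable equality and l₁ l₂ : List α, and let Paired : ℕ → ℕ → Prop be defined by well-founded recursion (on i + j): Paired i j holds iff i < l₁.length, j < l₂.length, the i-th element of l₁ equals the j-th element of l₂, no k < i satisfies Paired k j, and no k < j satisfies Paired i k. Call an index i < l₁.length unpaired if no j satisfies Paired i j. Then the multiset of elements of l₁ at unpaired indices equals the multiset difference of l₁ and l₂: it equals (↑l₁ : Multiset α) - (↑l₂ : Multiset α). -/

import Mathlib

/-- The paper's `Paired` recurrence for encoding `EXCEPT ALL`: positions
`i` of `l₁` and `j` of `l₂` are paired iff they hold equal elements and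
neither is paired with an earlier position of the other list. The recursion
is well-founded since `i + j` strictly decreases. -/
def Paired {α : Type*} (l₁ l₂ : List α) : ℕ → ℕ → Prop
  | i, j =>
    i < l₁.length ∧ j < l₂.length ∧ l₁[i]? = l₂[j]? ∧
    (∀ k, k < i → ¬ Paired l₁ l₂ k j) ∧
    (∀ k, k < j → ¬ Paired l₁ l₂ i k)
  termination_by i j => i + j
  decreasing_by all_goals omega


section Aux
variable {α : Type*} [DecidableEq α]

lemma count_take_succ {l : List α} {j : ℕ} {v : α} (h : l[j]? = some v) :
    (l.take (j+1)).count v = (l.take j).count v + 1 := by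
  rw [List.take_succ, h, List.count_append]
  simp

lemma count_take_mono (l : List α) (v : α) {j j' : ℕ} (h : j ≤ j') :
    (l.take j).count v ≤ (l.take j').count v := by
  have : l.take j = (l.take j').take j := by rw [List.take_take, Nat.min_eq_left h]
  rw [this]
  exact ((l.take j').take_prefix j).sublist.count_le v

lemma count_take_le (l : List α) (v : α) (j : ℕ) : (l.take j).count v ≤ l.count v :=
  (l.take_prefix j).sublist.count_le v

lemma count_take_lt {l : List α} {j : ℕ} {v : α} (h : l[j]? = some v) :
    (l.take j).count v < l.count v := by
  have h1 := count_take_succ h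
  have h2 := count_take_le l v (j+1)
  omega

lemma exists_occ {l : List α} {v : α} {m : ℕ} (h : m < l.count v) :
    ∃ j, l[j]? = some v ∧ (l.take j).count v = m := by
  induction l generalizing m with
  | nil => simp at h
  | cons a l ih =>
    by_cases hav : a = v
    · subst hav
      cases m with
      | zero => exact ⟨0, by simp, by simp⟩
      | succ m =>
        rw [List.count_cons_self] at h
        obtain ⟨j, hj1, hj2⟩ := ih (m := m) (by omega)
        exact ⟨j+1, by simpa using hj1,
          by rw [List.take_succ_cons, List.count_cons_self, hj2]⟩
    · rw [List.count_cons_of_ne hav] at h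
      obtain ⟨j, hj1, hj2⟩ := ih h
      exact ⟨j+1, by simpa using hj1,
        by rw [List.take_succ_cons, List.count_cons_of_ne hav, hj2]⟩

lemma occ_unique {l : List α} {v : α} {j j' : ℕ} (h : l[j]? = some v) (h' : l[j']? = some v)
    (hc : (l.take j).count v = (l.take j').count v) : j = j' := by
  by_contra hne
  rcases Nat.lt_or_ge j j' with hlt | hge
  · have := count_take_mono l v (show j + 1 ≤ j' by omega)
    have := count_take_succ h
    omega
  · have := count_take_mono l v (show j' + 1 ≤ j by omega)
    have := count_take_succ h'
    omega

lemma paired_iff (l₁ l₂ : List α) (i j : ℕ) : Paired l₁ l₂ i j ↔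
    ∃ v, l₁[i]? = some v ∧ l₂[j]? = some v ∧ (l₁.take i).count v = (l₂.take j).count v := by
  suffices H : ∀ n i j, i + j ≤ n → (Paired l₁ l₂ i j ↔
      ∃ v, l₁[i]? = some v ∧ l₂[j]? = some v ∧ (l₁.take i).count v = (l₂.take j).count v) from
    H (i+j) i j le_rfl
  intro n
  induction n with
  | zero =>
    intro i j hij
    have hi : i = 0 := by omega
    have hj : j = 0 := by omega
    subst hi; subst hj
    rw [Paired]
    constructor
    · rintro ⟨h1, h2, h3, -, -⟩
      obtain ⟨v, hv⟩ : ∃ v, l₁[0]? = some v := ⟨l₁[0]'h1, List.getElem?_eq_getElem h1⟩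
      exact ⟨v, hv, by rw [← h3, hv], by simp⟩
    · rintro ⟨v, hv1, hv2, -⟩
      refine ⟨?_, ?_, by rw [hv1, hv2], by omega, by omega⟩
      · exact (List.getElem?_eq_some_iff.mp hv1).1
      · exact (List.getElem?_eq_some_iff.mp hv2).1
  | succ n ih =>
    intro i j hij
    rw [Paired]
    constructor
    · rintro ⟨h1, h2, h3, h4, h5⟩
      obtain ⟨v, hv⟩ : ∃ v, l₁[i]? = some v := ⟨l₁[i]'h1, List.getElem?_eq_getElem h1⟩
      have hv2 : l₂[j]? = some v := by rw [← h3, hv]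
      refine ⟨v, hv, hv2, ?_⟩
      by_contra hne
      rcases Nat.lt_or_ge ((l₁.take i).count v) ((l₂.take j).count v) with hlt | hge
      · obtain ⟨k, hk1, hk2⟩ := exists_occ hlt
        have hkj : k < j := lt_of_lt_of_le (List.getElem?_eq_some_iff.mp hk1).1
          (le_trans (List.length_take_le j l₂) le_rfl)
        rw [List.getElem?_take, if_pos hkj] at hk1
        rw [List.take_take, Nat.min_eq_left (le_of_lt hkj)] at hk2
        exact h5 k hkj ((ih i k (by omega)).mpr ⟨v, hv, hk1, hk2.symm⟩)
      · have hlt : (l₂.take j).count v < (l₁.take i).count v := by omega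
        obtain ⟨k, hk1, hk2⟩ := exists_occ hlt
        have hki : k < i := lt_of_lt_of_le (List.getElem?_eq_some_iff.mp hk1).1
          (List.length_take_le i l₁)
        rw [List.getElem?_take, if_pos hki] at hk1
        rw [List.take_take, Nat.min_eq_left (le_of_lt hki)] at hk2
        exact h4 k hki ((ih k j (by omega)).mpr ⟨v, hk1, hv2, hk2⟩)
    · rintro ⟨v, hv1, hv2, hc⟩
      refine ⟨(List.getElem?_eq_some_iff.mp hv1).1, (List.getElem?_eq_some_iff.mp hv2).1,
        by rw [hv1, hv2], ?_, ?_⟩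
      · intro k hk hp
        obtain ⟨w, hw1, hw2, hwc⟩ := (ih k j (by omega)).mp hp
        have hwv : w = v := by rw [hv2] at hw2; exact (Option.some_inj.mp hw2.symm)
        subst hwv
        have := count_take_mono l₁ w (show k + 1 ≤ i by omega)
        have := count_take_succ hw1
        omega
      · intro k hk hp
        obtain ⟨w, hw1, hw2, hwc⟩ := (ih i k (by omega)).mp hp
        have hwv : w = v := by rw [hv1] at hw1; exact (Option.some_inj.mp hw1.symm)
        subst hwv
        have := count_take_mono l₂ w (show k + 1 ≤ j by omega)
        have := count_take_succ hw2
        omega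
end Aux

section Aux2
variable {α : Type*} [DecidableEq α]

lemma unpaired_iff {l₁ l₂ : List α} {i : ℕ} {v : α} (hv : l₁[i]? = some v) :
    (∀ j, ¬ Paired l₁ l₂ i j) ↔ l₂.count v ≤ (l₁.take i).count v := by
  constructor
  · intro h
    by_contra hlt
    push_neg at hlt
    obtain ⟨j, hj1, hj2⟩ := exists_occ hlt
    exact h j ((paired_iff l₁ l₂ i j).mpr ⟨v, hv, hj1, hj2.symm⟩)
  · intro hge j hp
    obtain ⟨w, hw1, hw2, hc⟩ := (paired_iff l₁ l₂ i j).mp hp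
    have hwv : w = v := Option.some_inj.mp (hv ▸ hw1).symm
    subst hwv
    have := count_take_lt hw2
    omega
end Aux2

open Classical in
/-- Correctness of the `EXCEPT ALL` encoding: the multiset of elements of
`l₁` at unpaired indices is exactly the multiset difference `l₁ - l₂`. -/
theorem unpaired_eq_bag_difference {α : Type*} [DecidableEq α] (l₁ l₂ : List α) :
    (↑((List.range l₁.length).filterMap
        (fun i => if ∀ j, ¬ Paired l₁ l₂ i j then l₁[i]? else none)) : Multiset α)
      = (↑l₁ : Multiset α) - (↑l₂ : Multiset α) := by
  ext v
  rw [Multiset.coe_count, Multiset.count_sub, Multiset.coe_count, Multiset.coe_count,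
    List.count_filterMap]
  have hpt : (fun i => (if ∀ j, ¬ Paired l₁ l₂ i j then l₁[i]? else none) == some v) =
      (fun i => decide (l₁[i]? = some v ∧ l₂.count v ≤ (l₁.take i).count v)) := by
    funext i
    split_ifs with h
    · by_cases hv : l₁[i]? = some v
      · simp only [hv, beq_self_eq_true, true_and]
        rw [eq_comm, decide_eq_true_eq]
        exact (unpaired_iff hv).mp h
      · simp [hv]
    · have : ¬ (l₁[i]? = some v ∧ l₂.count v ≤ (l₁.take i).count v) := by
        rintro ⟨hv, hc⟩
        exact h ((unpaired_iff hv).mpr hc)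
      simp [this]
  rw [hpt, List.countP_eq_length_filter]
  have hcard : ((List.range l₁.length).filter
        (fun i => decide (l₁[i]? = some v ∧ l₂.count v ≤ (l₁.take i).count v))).length
      = ((Finset.range l₁.length).filter
        (fun i => l₁[i]? = some v ∧ l₂.count v ≤ (l₁.take i).count v)).card := rfl
  rw [hcard]
  rw [show l₁.count v - l₂.count v = ((Finset.Ico (l₂.count v) (l₁.count v)).card) by
    rw [Nat.card_Ico]]
  apply Finset.card_bij (fun i _ => (l₁.take i).count v)
  · intro i hi
    rw [Finset.mem_filter, Finset.mem_range] at hi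
    obtain ⟨-, hv, hc⟩ := hi
    exact Finset.mem_Ico.mpr ⟨hc, count_take_lt hv⟩
  · intro i hi i' hi' heq
    rw [Finset.mem_filter] at hi hi'
    exact occ_unique hi.2.1 hi'.2.1 heq
  · intro m hm
    rw [Finset.mem_Ico] at hm
    obtain ⟨i, hi1, hi2⟩ := exists_occ hm.2
    refine ⟨i, ?_, hi2⟩
    rw [Finset.mem_filter, Finset.mem_range]
    exact ⟨(List.getElem?_eq_some_iff.mp hi1).1, hi1, by omega⟩
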